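/- arXiv:2511.16802 — 4 statements merged into one kernel-verified Lean document; each statement's English description precedes it below -/
import Mathlib

section
/- For p ∈ (0,1), q ∈ [0,1), and l ≥ 0, the inequality (1+l)/(1-p(1-q)+l) · sqrt(1-p(1-q²)) < 1 holds if and only if l > (1-p)(1-q)/(sqrt(1-p(1-q²)) + q). -/
theorem stmt_0 (p q l : ℝ) (hp0 : 0 < p) (hp1 : p < 1) (hq0 : 0 ≤ q) (hq1 : q < 1)
    (hl : 0 ≤ l) :
    (1 + l) / (1 - p * (1 - q) + l) * Real.sqrt (1 - p * (1 - q ^ 2)) < 1 ↔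
      l > (1 - p) * (1 - q) / (Real.sqrt (1 - p * (1 - q ^ 2)) + q) := by
  set s := Real.sqrt (1 - p * (1 - q ^ 2)) with hs
  have harg : 0 < 1 - p * (1 - q ^ 2) := by nlinarith [sq_nonneg q]
  have hs2 : s ^ 2 = 1 - p * (1 - q ^ 2) := Real.sq_sqrt harg.le
  have hspos : 0 < s := Real.sqrt_pos.2 harg
  have hpq : 0 < p * (1 - q ^ 2) := mul_pos hp0 (by nlinarith)
  have hslt1 : s < 1 := by nlinarith [hs2, hspos, hpq]
  have hd : 0 < 1 - p * (1 - q) + l := by nlinarith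
  rw [div_mul_eq_mul_div, div_lt_one hd, gt_iff_lt,
    div_lt_iff₀ (by positivity : 0 < s + q)]
  constructor <;> intro h <;> nlinarith [hs2, hspos, hslt1]
end

section
/- Fix l ≥ 0 and p ∈ (0,1). The function q ↦ (1+l)/(1-p(1-q)+l) · sqrt(1-p(1-q²)), defined for q ∈ [0,1], attains its minimum on [0,1] at q* = (1-p)/(1-p+l), and the minimum value is strictly less than 1 whenever l > 0. -/
theorem stmt_5 (l p : ℝ) (hl : 0 ≤ l) (hp0 : 0 < p) (hp1 : p < 1) :
    (∀ q ∈ Set.Icc (0 : ℝ) 1,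
      (1 + l) / (1 - p * (1 - (1 - p) / (1 - p + l)) + l) *
          Real.sqrt (1 - p * (1 - ((1 - p) / (1 - p + l)) ^ 2)) ≤
        (1 + l) / (1 - p * (1 - q) + l) * Real.sqrt (1 - p * (1 - q ^ 2))) ∧
    (0 < l →
      (1 + l) / (1 - p * (1 - (1 - p) / (1 - p + l)) + l) *
          Real.sqrt (1 - p * (1 - ((1 - p) / (1 - p + l)) ^ 2)) < 1) := by
  have ha : 0 < 1 - p := by linarith
  have hal : 0 < 1 - p + l := by linarith
  set E : ℝ := (1 - p) + 2 * (1 - p) * l + l ^ 2 with hEdef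
  have hE : 0 < E := by nlinarith
  have h1 : 1 - p * (1 - (1 - p) / (1 - p + l)) + l = E / (1 - p + l) := by
    field_simp
    ring
  have h2 : 1 - p * (1 - ((1 - p) / (1 - p + l)) ^ 2) = (1 - p) * E / (1 - p + l) ^ 2 := by
    field_simp
    ring
  have hsqrt2 : Real.sqrt ((1 - p) * E / (1 - p + l) ^ 2)
      = Real.sqrt ((1 - p) * E) / (1 - p + l) := by
    rw [Real.sqrt_div (by positivity), Real.sqrt_sq hal.le]
  have hM : (1 + l) / (1 - p * (1 - (1 - p) / (1 - p + l)) + l) *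
      Real.sqrt (1 - p * (1 - ((1 - p) / (1 - p + l)) ^ 2))
      = (1 + l) * Real.sqrt ((1 - p) * E) / E := by
    rw [h1, h2, hsqrt2]
    field_simp
  have hlpos : 0 < 1 + l := by linarith
  constructor
  · intro q hq
    obtain ⟨hq0, hq1⟩ := hq
    set D : ℝ := 1 - p * (1 - q) + l with hDdef
    set S : ℝ := 1 - p * (1 - q ^ 2) with hSdef
    have hD : 0 < D := by nlinarith
    have hS : 0 < S := by nlinarith
    rw [hM]
    rw [div_le_iff₀ hE]
    rw [show (1 + l) / D * Real.sqrt S * E = (1 + l) * Real.sqrt S * E / D by ring,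
      le_div_iff₀ hD]
    -- goal : (1+l) * sqrt((1-p)*E) * D ≤ (1+l) * sqrt S * E
    have k1 : (1 - p) * E * D ^ 2 ≤ S * E * E := by
      have id1 : S * E - (1 - p) * D ^ 2 = p * ((1 - p) * (1 - q) - l * q) ^ 2 := by
        rw [hSdef, hEdef, hDdef]; ring
      have base : (1 - p) * D ^ 2 ≤ S * E := by
        linarith [id1, mul_nonneg hp0.le (sq_nonneg ((1 - p) * (1 - q) - l * q))]
      calc (1 - p) * E * D ^ 2 = (1 - p) * D ^ 2 * E := by ring
        _ ≤ S * E * E := mul_le_mul_of_nonneg_right base hE.le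
    have e1 : Real.sqrt ((1 - p) * E) * D = Real.sqrt ((1 - p) * E * D ^ 2) := by
      rw [Real.sqrt_mul (show (0:ℝ) ≤ (1 - p) * E by positivity) (D ^ 2), Real.sqrt_sq hD.le]
    have e2 : Real.sqrt S * E = Real.sqrt (S * E * E) := by
      rw [show S * E * E = S * E ^ 2 by ring, Real.sqrt_mul hS.le, Real.sqrt_sq hE.le]
    have main : Real.sqrt ((1 - p) * E) * D ≤ Real.sqrt S * E := by
      rw [e1, e2]
      exact Real.sqrt_le_sqrt k1
    calc (1 + l) * Real.sqrt ((1 - p) * E) * D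
        = (1 + l) * (Real.sqrt ((1 - p) * E) * D) := by ring
      _ ≤ (1 + l) * (Real.sqrt S * E) := by
          exact mul_le_mul_of_nonneg_left main hlpos.le
      _ = (1 + l) * Real.sqrt S * E := by ring
  · intro hl0
    rw [hM, div_lt_one hE]
    have he : E - (1 - p) * (1 + l) ^ 2 = l ^ 2 * p := by rw [hEdef]; ring
    have k2 : (1 - p) * E * (1 + l) ^ 2 < E ^ 2 := by
      nlinarith [he, mul_pos hE (show (0:ℝ) < l ^ 2 * p by positivity)]
    have e3 : Real.sqrt ((1 - p) * E * (1 + l) ^ 2) = (1 + l) * Real.sqrt ((1 - p) * E) := by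
      rw [Real.sqrt_mul (show (0:ℝ) ≤ (1 - p) * E by positivity), Real.sqrt_sq hlpos.le]
      ring
    rw [← e3]
    calc Real.sqrt ((1 - p) * E * (1 + l) ^ 2) < Real.sqrt (E ^ 2) :=
          Real.sqrt_lt_sqrt (by positivity) k2
      _ = E := Real.sqrt_sq hE.le
end

section
/- Let a₀, w₀, γ > 0, p₀ = a₀/(a₀+w₀), q ∈ [0,1), l ≥ 0, and R₀ > 0. Then R₀·(1+l)/(c(p₀,q)+l)·sqrt(1-p₀(1-q²) - p₀(1-q)²w₀/(a₀+w₀+γ)) < R₀·(1+l)/(c(p₀,q)+l)·sqrt(1-p₀(1-q²)). -/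
theorem stmt_7 (a₀ w₀ γ q l R₀ : ℝ) (ha : 0 < a₀) (hw : 0 < w₀) (hγ : 0 < γ)
    (hq0 : 0 ≤ q) (hq1 : q < 1) (hl : 0 ≤ l) (hR : 0 < R₀)
    (hpos : 0 < 1 - (a₀ / (a₀ + w₀)) * (1 - q ^ 2)) :
    R₀ * (1 + l) / (1 - (a₀ / (a₀ + w₀)) * (1 - q) + l) *
        Real.sqrt (1 - (a₀ / (a₀ + w₀)) * (1 - q ^ 2) -
          (a₀ / (a₀ + w₀)) * (1 - q) ^ 2 * w₀ / (a₀ + w₀ + γ)) <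
      R₀ * (1 + l) / (1 - (a₀ / (a₀ + w₀)) * (1 - q) + l) *
        Real.sqrt (1 - (a₀ / (a₀ + w₀)) * (1 - q ^ 2)) := by
  have haw : 0 < a₀ + w₀ := by linarith
  have hp0 : 0 < a₀ / (a₀ + w₀) := div_pos ha haw
  have hp1 : a₀ / (a₀ + w₀) < 1 := (div_lt_one haw).2 (by linarith)
  have hc : 0 < 1 - (a₀ / (a₀ + w₀)) * (1 - q) := by nlinarith
  have hpre : 0 < R₀ * (1 + l) / (1 - (a₀ / (a₀ + w₀)) * (1 - q) + l) :=
    div_pos (by nlinarith) (by linarith)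
  have hsub : 0 < (a₀ / (a₀ + w₀)) * (1 - q) ^ 2 * w₀ / (a₀ + w₀ + γ) := by
    apply div_pos _ (by linarith)
    exact mul_pos (mul_pos hp0 (by nlinarith)) hw
  refine mul_lt_mul_of_pos_left ?_ hpre
  set x := 1 - (a₀ / (a₀ + w₀)) * (1 - q ^ 2) -
      (a₀ / (a₀ + w₀)) * (1 - q) ^ 2 * w₀ / (a₀ + w₀ + γ) with hx
  rcases le_or_gt 0 x with h | h
  · exact Real.sqrt_lt_sqrt h (by linarith)
  · calc Real.sqrt x = 0 := Real.sqrt_eq_zero_of_nonpos h.le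
      _ < _ := Real.sqrt_pos.2 hpos
end

section
/- Consider the cubic λ³ + Aλ² + Bλ + C with A = γ+μ+k, B = k(γ+μ+γδ), C = 2μkγδ, where γ, μ, k, δ > 0. All roots have negative real part if and only if k > -(γδ(γ-μ) + (γ+μ)²)/(γ+μ+γδ). In particular, if γ ≥ μ this holds for all k > 0. -/
open Complex in
lemma cubic_split (A B C x y : ℝ) :
    ((x:ℂ)+y*I)^3 + (A:ℂ)*((x:ℂ)+y*I)^2 + (B:ℂ)*((x:ℂ)+y*I) + (C:ℂ)
      = ((x^3-3*x*y^2+A*(x^2-y^2)+B*x+C : ℝ) : ℂ)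
        + ((3*x^2*y-y^3+2*A*x*y+B*y : ℝ) : ℂ)*I := by
  have h : (I:ℂ)^2 = -1 := Complex.I_sq
  push_cast
  linear_combination (3*(x:ℂ)*y^2 + y^3*I + A*y^2) * h

lemma routh_cubic (A B C : ℝ) (hA : 0 < A) (hB : 0 < B) (hC : 0 < C) :
    (∀ z : ℂ, z ^ 3 + (A:ℂ) * z ^ 2 + (B:ℂ) * z + (C:ℂ) = 0 → z.re < 0) ↔ C < A * B := by
  constructor
  · intro h
    by_contra hle
    push_neg at hle  -- A*B ≤ C
    set g : ℝ → ℝ := fun x => 2*x*((2*x+A)^2+B) - (C - A*B) with hg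
    have hM : (0:ℝ) ≤ C/(2*B) := by positivity
    have hcont : ContinuousOn g (Set.Icc 0 (C/(2*B))) := by fun_prop
    have h0 : g 0 ≤ 0 := by simp [hg]; linarith
    have h1 : 0 ≤ g (C/(2*B)) := by
      have h2 : 2*(C/(2*B))*B = C := by field_simp
      have h3 : 2*(C/(2*B))*B ≤ 2*(C/(2*B))*((2*(C/(2*B))+A)^2+B) := by
        have : 0 ≤ C/(2*B) := hM
        nlinarith [sq_nonneg (2*(C/(2*B))+A)]
      simp only [hg]
      nlinarith
    obtain ⟨x₀, hx₀mem, hx₀⟩ := intermediate_value_Icc hM hcont ⟨h0, h1⟩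
    have hx0 : 0 ≤ x₀ := hx₀mem.1
    have hypos : 0 < 3*x₀^2+2*A*x₀+B := by nlinarith
    set y := Real.sqrt (3*x₀^2+2*A*x₀+B) with hy
    have hy2 : y^2 = 3*x₀^2+2*A*x₀+B := Real.sq_sqrt hypos.le
    have hroot : ((x₀:ℂ)+y*Complex.I)^3 + (A:ℂ)*((x₀:ℂ)+y*Complex.I)^2
        + (B:ℂ)*((x₀:ℂ)+y*Complex.I) + (C:ℂ) = 0 := by
      rw [cubic_split]
      have hre : x₀^3-3*x₀*y^2+A*(x₀^2-y^2)+B*x₀+C = 0 := by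
        have hgx := hx₀; simp only [hg] at hgx; nlinarith [hy2]
      have him : 3*x₀^2*y-y^3+2*A*x₀*y+B*y = 0 := by linear_combination (-y) * hy2
      rw [hre, him]; simp
    have := h _ hroot
    simp at this
    linarith
  · intro hlt z hz
    have hzeq : (↑z.re + ↑z.im * Complex.I : ℂ) = z := Complex.re_add_im z
    have key := cubic_split A B C z.re z.im
    rw [hzeq] at key
    have h2 := key.symm.trans hz
    set a := z.re ^ 3 - 3 * z.re * z.im ^ 2 + A * (z.re ^ 2 - z.im ^ 2) + B * z.re + C with haa
    set b := 3 * z.re ^ 2 * z.im - z.im ^ 3 + 2 * A * z.re * z.im + B * z.im with hbb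
    have hre : a = 0 := by simpa using congrArg Complex.re h2
    have him : b = 0 := by simpa using congrArg Complex.im h2
    rw [haa] at hre
    rw [hbb] at him
    by_cases hy : z.im = 0
    · rw [hy] at hre
      by_contra hx
      push_neg at hx
      nlinarith
    · have hy2 : z.im^2 = 3*z.re^2+2*A*z.re+B := by
        have hfac : z.im*(3*z.re^2+2*A*z.re+B-z.im^2) = 0 := by linarith [him]
        rcases mul_eq_zero.1 hfac with h | h
        · exact absurd h hy
        · linarith
      have hkey : 2*z.re*((2*z.re+A)^2+B) = C - A*B := by nlinarith
      by_contra hx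
      push_neg at hx
      nlinarith [sq_nonneg (2*z.re+A)]

theorem stmt_17 (γ μ k δ : ℝ) (hγ : 0 < γ) (hμ : 0 < μ) (hk : 0 < k) (hδ : 0 < δ) :
    ((∀ z : ℂ, z ^ 3 + (γ + μ + k : ℝ) * z ^ 2 + (k * (γ + μ + γ * δ) : ℝ) * z +
        (2 * μ * k * γ * δ : ℝ) = 0 → z.re < 0) ↔
      k > -(γ * δ * (γ - μ) + (γ + μ) ^ 2) / (γ + μ + γ * δ)) ∧
    (γ ≥ μ → k > -(γ * δ * (γ - μ) + (γ + μ) ^ 2) / (γ + μ + γ * δ)) := by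
  have hD : 0 < γ + μ + γ * δ := by positivity
  have hiff2 : k > -(γ * δ * (γ - μ) + (γ + μ) ^ 2) / (γ + μ + γ * δ) ↔
      2 * μ * k * γ * δ < (γ + μ + k) * (k * (γ + μ + γ * δ)) := by
    rw [gt_iff_lt, div_lt_iff₀ hD]
    constructor <;> intro h <;> nlinarith
  constructor
  · rw [routh_cubic _ _ _ (by positivity) (by positivity) (by positivity)]
    exact hiff2.symm
  · intro hge
    rw [gt_iff_lt, div_lt_iff₀ hD]
    nlinarith [sq_nonneg (γ + μ)]
end
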